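/- Let μ > 0 and let v be a solution of problem (AP). If v has a double zero, i.e., there exists r* ∈ [0,1] with v(r*) = 0 and v'(r*) = 0, then v ≡ 0 on [0,1]. -/

import Mathlib

open Set Filter Topology intervalIntegral

/-- `v` (with derivative `v'`) is a solution of problem (AP) with exponent `p`,
weight `a` and parameter `μ`: `v ∈ C¹[0,1]`, `r ↦ |v'|^{p-2} v'` is differentiable on `(0,1)`
with derivative `-(μ^{p-1}(p-1) r^{p-2} a(r) |v|^{p-2} v)`, and `v'(0) = v(1) = 0`. -/
def APSol (p μ : ℝ) (a v v' : ℝ → ℝ) : Prop :=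
  ContinuousOn v' (Icc 0 1) ∧
  (∀ r ∈ Icc (0:ℝ) 1, HasDerivWithinAt v (v' r) (Icc 0 1) r) ∧
  (∀ r ∈ Ioo (0:ℝ) 1,
    HasDerivAt (fun t => |v' t| ^ (p - 2) * v' t)
      (-(μ ^ (p - 1) * (p - 1) * r ^ (p - 2) * a r * (|v r| ^ (p - 2) * v r))) r) ∧
  v' 0 = 0 ∧ v 1 = 0

/-- The Rayleigh-quotient infimum `η₁(p)`. -/
noncomputable def eta1 (a : ℝ → ℝ) (p : ℝ) : ℝ :=
  sInf { q : ℝ | ∃ v v' : ℝ → ℝ,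
    ContinuousOn v' (Icc 0 1) ∧
    (∀ r ∈ Icc (0:ℝ) 1, HasDerivWithinAt v (v' r) (Icc 0 1) r) ∧
    v' 0 = 0 ∧ v 1 = 0 ∧ (∃ r ∈ Icc (0:ℝ) 1, v r ≠ 0) ∧
    q = (∫ r in (0:ℝ)..1, |v' r| ^ p) /
        ((p - 1) * ∫ r in (0:ℝ)..1, r ^ (p - 2) * a r * |v r| ^ p) }

/-- The principal eigenvalue `μ₁(p) = η₁(p)^{1/(p-1)}`. -/
noncomputable def mu1 (a : ℝ → ℝ) (p : ℝ) : ℝ := eta1 a p ^ (1 / (p - 1))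

/-- `||x|^(c-2) * x| = |x|^(c-1)` for `c > 1`. -/
lemma abs_rpow_mul_self {c : ℝ} (hc : 1 < c) (x : ℝ) :
    abs (|x| ^ (c - 2) * x) = |x| ^ (c - 1) := by
  rcases eq_or_ne x 0 with h | h
  · simp [h, Real.zero_rpow (show c - 1 ≠ 0 by linarith)]
  · rw [abs_mul, abs_of_nonneg (Real.rpow_nonneg (abs_nonneg x) _),
      show c - 1 = (c - 2) + 1 by ring, Real.rpow_add_one (abs_ne_zero.mpr h)]

theorem stmt1 (p : ℝ) (hp : 2 ≤ p) (a : ℝ → ℝ)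
    (ha : ContinuousOn a (Icc 0 1)) (ha0 : ∀ r ∈ Icc (0:ℝ) 1, 0 ≤ a r)
    (hanv : ∀ s t : ℝ, 0 ≤ s → s < t → t ≤ 1 → ∃ r ∈ Ioo s t, a r ≠ 0)
    (μ : ℝ) (hμ : 0 < μ) (v v' : ℝ → ℝ) (hv : APSol p μ a v v')
    (hdz : ∃ r ∈ Icc (0:ℝ) 1, v r = 0 ∧ v' r = 0) :
    ∀ r ∈ Icc (0:ℝ) 1, v r = 0 := by
  obtain ⟨hv'c, hvd, hwd, _, _⟩ := hv
  obtain ⟨rs, hrs, hvrs, hv'rs⟩ := hdz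
  have hp1 : (1:ℝ) < p := by linarith
  have hpne : p ≠ 0 := by linarith
  have hp1' : (0:ℝ) < p - 1 := by linarith
  set q : ℝ := p / (p - 1) with hqdef
  have hq1 : 1 < q := by
    rw [hqdef, lt_div_iff₀ hp1']; linarith
  have hqp : q ≤ p := by
    rw [hqdef, div_le_iff₀ hp1']; nlinarith
  have hqne : q ≠ 0 := by linarith
  have hpq1 : (p - 1) * (q - 1) = 1 := by
    rw [hqdef]; field_simp; ring
  have hpqc : Real.HolderConjugate q p :=
    Real.holderConjugate_iff.mpr ⟨hq1, by rw [hqdef]; field_simp; ring⟩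
  -- the momentum variable
  set w : ℝ → ℝ := fun t => |v' t| ^ (p - 2) * v' t with hwdef
  have habsw : ∀ t, |w t| = |v' t| ^ (p - 1) := fun t => abs_rpow_mul_self hp1 (v' t)
  -- |v' t| = |w t| ^ (q - 1)
  have hv'w : ∀ t, |v' t| = |w t| ^ (q - 1) := by
    intro t
    rw [habsw, ← Real.rpow_mul (abs_nonneg _), hpq1, Real.rpow_one]
  -- the energy
  set G : ℝ → ℝ := fun r => |v r| ^ p / p + |w r| ^ q / q with hGdef
  have hGnonneg : ∀ r, 0 ≤ G r := by
    intro r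
    have h1 : (0:ℝ) ≤ |v r| ^ p := Real.rpow_nonneg (abs_nonneg _) _
    have h2 : (0:ℝ) ≤ |w r| ^ q := Real.rpow_nonneg (abs_nonneg _) _
    have : (0:ℝ) < q := by linarith
    positivity
  have hGrs : G rs = 0 := by
    simp only [hGdef, hwdef, hvrs, hv'rs, abs_zero,
      Real.zero_rpow hpne, mul_zero, Real.zero_rpow hqne]
    norm_num
  -- bound on a
  obtain ⟨M, hM⟩ := isCompact_Icc.exists_bound_of_continuousOn ha
  have hM0 : 0 ≤ M := le_trans (norm_nonneg (a 0)) (hM 0 (by norm_num))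
  set C : ℝ := μ ^ (p - 1) * (p - 1) * M with hCdef
  have hC0 : 0 ≤ C := by
    have := Real.rpow_nonneg hμ.le (p - 1); positivity
  set K : ℝ := (1 + C) * (p + 1) with hKdef
  have hK0 : 0 < K := by nlinarith
  -- the candidate derivative of G
  set D : ℝ → ℝ := fun r => |v r| ^ (p - 2) * v r * v' r +
      |w r| ^ (q - 2) * w r *
        (-(μ ^ (p - 1) * (p - 1) * r ^ (p - 2) * a r * (|v r| ^ (p - 2) * v r))) with hDdef
  have hGderiv : ∀ r ∈ Ioo (0:ℝ) 1, HasDerivAt G (D r) r := by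
    intro r hr
    have hmem : Icc (0:ℝ) 1 ∈ 𝓝 r := Icc_mem_nhds hr.1 hr.2
    have hvr : HasDerivAt v (v' r) r := (hvd r (Ioo_subset_Icc_self hr)).hasDerivAt hmem
    have h1 : HasDerivAt (fun t => |v t| ^ p) (p * |v r| ^ (p - 2) * v r * v' r) r := by
      have := (hasDerivAt_abs_rpow (v r) hp1).comp r hvr
      refine this.congr_deriv ?_
      ring
    have h2 : HasDerivAt (fun t => |w t| ^ q)
        (q * |w r| ^ (q - 2) * w r *
          (-(μ ^ (p - 1) * (p - 1) * r ^ (p - 2) * a r * (|v r| ^ (p - 2) * v r)))) r := by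
      have := (hasDerivAt_abs_rpow (w r) hq1).comp r (hwd r hr)
      refine this.congr_deriv ?_
      ring
    have := (h1.div_const p).add (h2.div_const q)
    refine this.congr_deriv ?_
    rw [hDdef]
    field_simp
  -- the key differential inequality
  have hDbound : ∀ r ∈ Ioo (0:ℝ) 1, |D r| ≤ K * G r := by
    intro r hr
    have hA : (0:ℝ) ≤ |v r| ^ p := Real.rpow_nonneg (abs_nonneg _) _
    have hB : (0:ℝ) ≤ |w r| ^ q := Real.rpow_nonneg (abs_nonneg _) _
    have ht1 : abs (|v r| ^ (p - 2) * v r * v' r) = |v r| ^ (p - 1) * |w r| ^ (q - 1) := by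
      rw [abs_mul, abs_rpow_mul_self hp1, hv'w]
    have hw'bound : abs (-(μ ^ (p - 1) * (p - 1) * r ^ (p - 2) * a r * (|v r| ^ (p - 2) * v r)))
        ≤ C * |v r| ^ (p - 1) := by
      rw [abs_neg, abs_mul, abs_rpow_mul_self hp1]
      have h1 : abs (μ ^ (p - 1) * (p - 1) * r ^ (p - 2) * a r) ≤ C := by
        have hr2 : r ^ (p - 2) ≤ 1 := Real.rpow_le_one hr.1.le hr.2.le (by linarith)
        have hr2' : (0:ℝ) ≤ r ^ (p - 2) := Real.rpow_nonneg hr.1.le _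
        have har : 0 ≤ a r := ha0 r (Ioo_subset_Icc_self hr)
        have harM : a r ≤ M := le_trans (le_abs_self _) (hM r (Ioo_subset_Icc_self hr))
        have hmu : (0:ℝ) ≤ μ ^ (p - 1) := Real.rpow_nonneg hμ.le _
        rw [abs_of_nonneg (by positivity)]
        rw [hCdef]
        calc μ ^ (p - 1) * (p - 1) * r ^ (p - 2) * a r
            ≤ μ ^ (p - 1) * (p - 1) * 1 * a r := by
              apply mul_le_mul_of_nonneg_right _ har
              apply mul_le_mul_of_nonneg_left hr2 (by positivity)
          _ = μ ^ (p - 1) * (p - 1) * a r := by ring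
          _ ≤ μ ^ (p - 1) * (p - 1) * M := by
              apply mul_le_mul_of_nonneg_left harM (by positivity)
      exact mul_le_mul_of_nonneg_right h1 (Real.rpow_nonneg (abs_nonneg _) _)
    have ht2 : abs (|w r| ^ (q - 2) * w r *
        (-(μ ^ (p - 1) * (p - 1) * r ^ (p - 2) * a r * (|v r| ^ (p - 2) * v r))))
        ≤ |w r| ^ (q - 1) * (C * |v r| ^ (p - 1)) := by
      rw [abs_mul, abs_rpow_mul_self hq1]
      exact mul_le_mul_of_nonneg_left hw'bound (Real.rpow_nonneg (abs_nonneg _) _)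
    -- Young's inequality
    have hy : |v r| ^ (p - 1) * |w r| ^ (q - 1) ≤ |v r| ^ p / q + |w r| ^ q / p := by
      have := Real.young_inequality_of_nonneg
        (Real.rpow_nonneg (abs_nonneg (v r)) (p - 1))
        (Real.rpow_nonneg (abs_nonneg (w r)) (q - 1)) hpqc
      rw [← Real.rpow_mul (abs_nonneg _), ← Real.rpow_mul (abs_nonneg _)] at this
      have e1 : (p - 1) * q = p := by rw [hqdef]; field_simp
      have e2 : (q - 1) * p = q := by
        rw [hqdef]; field_simp; ring
      rw [e1, e2] at this
      exact this
    have hstep : |v r| ^ p / q + |w r| ^ q / p ≤ (p + 1) * G r := by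
      have h1 : |v r| ^ p / q ≤ |v r| ^ p := div_le_self hA hq1.le
      have h2 : |w r| ^ q / p ≤ |w r| ^ q / q :=
        div_le_div_of_nonneg_left hB (by linarith) hqp
      have h3 : |v r| ^ p = p * (|v r| ^ p / p) := by field_simp
      have h4 : (0:ℝ) ≤ |w r| ^ q / q := by positivity
      have h5 : (0:ℝ) ≤ |v r| ^ p / p := by positivity
      rw [hGdef]
      nlinarith [mul_nonneg (show (0:ℝ) ≤ p by linarith) h4]
    calc |D r| ≤ abs (|v r| ^ (p - 2) * v r * v' r) +
        abs (|w r| ^ (q - 2) * w r *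
          (-(μ ^ (p - 1) * (p - 1) * r ^ (p - 2) * a r * (|v r| ^ (p - 2) * v r)))) :=
          abs_add_le _ _
      _ ≤ |v r| ^ (p - 1) * |w r| ^ (q - 1) + |w r| ^ (q - 1) * (C * |v r| ^ (p - 1)) := by
          rw [ht1]; exact add_le_add_right ht2 _
      _ = (1 + C) * (|v r| ^ (p - 1) * |w r| ^ (q - 1)) := by ring
      _ ≤ (1 + C) * (|v r| ^ p / q + |w r| ^ q / p) :=
          mul_le_mul_of_nonneg_left hy (by linarith)
      _ ≤ (1 + C) * ((p + 1) * G r) := mul_le_mul_of_nonneg_left hstep (by linarith)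
      _ = K * G r := by rw [hKdef]; ring
  -- continuity of G on [0,1]
  have hvc : ContinuousOn v (Icc 0 1) := fun x hx => (hvd x hx).continuousWithinAt
  have hwc : ContinuousOn w (Icc 0 1) :=
    (hv'c.abs.rpow_const (fun x _ => Or.inr (by linarith))).mul hv'c
  have hGc : ContinuousOn G (Icc 0 1) :=
    ((hvc.abs.rpow_const (fun x _ => Or.inr (by linarith))).div_const p).add
      ((hwc.abs.rpow_const (fun x _ => Or.inr (by linarith))).div_const q)
  -- the increasing auxiliary function
  have hmono : MonotoneOn (fun r => G r * Real.exp (K * r)) (Icc 0 1) := by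
    have hcont1 : ContinuousOn (fun r => G r * Real.exp (K * r)) (Icc 0 1) :=
      hGc.mul ((Real.continuous_exp.comp (continuous_const.mul continuous_id)).continuousOn)
    apply monotoneOn_of_deriv_nonneg (convex_Icc 0 1) hcont1
    · rw [interior_Icc]
      intro x hx
      exact ((hGderiv x hx).mul
        (((hasDerivAt_id x).const_mul K).exp)).differentiableAt.differentiableWithinAt
    · rw [interior_Icc]
      intro x hx
      have hd : HasDerivAt (fun r => G r * Real.exp (K * r))
          (D x * Real.exp (K * x) + G x * (Real.exp (K * x) * (K * 1))) x :=
        (hGderiv x hx).mul (((hasDerivAt_id x).const_mul K).exp)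
      rw [hd.deriv]
      have h1 : -(K * G x) ≤ D x := neg_le_of_abs_le (hDbound x hx)
      have h2 : (0:ℝ) < Real.exp (K * x) := Real.exp_pos _
      nlinarith
  have hanti : AntitoneOn (fun r => G r * Real.exp (-(K * r))) (Icc 0 1) := by
    have hcont2 : ContinuousOn (fun r => G r * Real.exp (-(K * r))) (Icc 0 1) :=
      hGc.mul ((Real.continuous_exp.comp (continuous_const.mul continuous_id).neg).continuousOn)
    apply antitoneOn_of_deriv_nonpos (convex_Icc 0 1) hcont2
    · rw [interior_Icc]
      intro x hx
      exact ((hGderiv x hx).mul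
        (((hasDerivAt_id x).const_mul K).neg.exp)).differentiableAt.differentiableWithinAt
    · rw [interior_Icc]
      intro x hx
      have hd : HasDerivAt (fun r => G r * Real.exp (-(K * r)))
          (D x * Real.exp (-(K * x)) + G x * (Real.exp (-(K * x)) * (-(K * 1)))) x :=
        (hGderiv x hx).mul (((hasDerivAt_id x).const_mul K).neg.exp)
      rw [hd.deriv]
      have h1 : D x ≤ K * G x := le_of_abs_le (hDbound x hx)
      have h2 : (0:ℝ) < Real.exp (-(K * x)) := Real.exp_pos _
      nlinarith
  -- conclude G ≡ 0
  intro r hr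
  have hGr0 : G r = 0 := by
    rcases le_total r rs with hle | hle
    · have h := hmono hr hrs hle
      simp only [hGrs, zero_mul] at h
      have h2 : G r * Real.exp (K * r) = 0 :=
        le_antisymm h (mul_nonneg (hGnonneg r) (Real.exp_pos _).le)
      rcases mul_eq_zero.mp h2 with h3 | h3
      · exact h3
      · exact absurd h3 (Real.exp_ne_zero _)
    · have h := hanti hrs hr hle
      simp only [hGrs, zero_mul] at h
      have h2 : G r * Real.exp (-(K * r)) = 0 :=
        le_antisymm h (mul_nonneg (hGnonneg r) (Real.exp_pos _).le)
      rcases mul_eq_zero.mp h2 with h3 | h3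
      · exact h3
      · exact absurd h3 (Real.exp_ne_zero _)
  have hA : (0:ℝ) ≤ |v r| ^ p := Real.rpow_nonneg (abs_nonneg _) _
  have hB : (0:ℝ) ≤ |w r| ^ q := Real.rpow_nonneg (abs_nonneg _) _
  have hq0 : (0:ℝ) < q := by linarith
  have hp0 : (0:ℝ) < p := by linarith
  have hGr0' := hGr0
  rw [hGdef] at hGr0'
  have h1 : (0:ℝ) ≤ |w r| ^ q / q := by positivity
  have h2 : (0:ℝ) ≤ |v r| ^ p / p := by positivity
  have h3 : |v r| ^ p / p = 0 := by linarith [hGr0']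
  have h4 : |v r| ^ p = 0 := by
    rcases div_eq_zero_iff.mp h3 with h | h
    · exact h
    · exact absurd h hpne
  have h5 := (Real.rpow_eq_zero (abs_nonneg _) hpne).mp h4
  exact abs_eq_zero.mp h5
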